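/- Let d ≥ 1, κ > 0, S > 0 and set x₀ = max(1, ((d + 4/3)/κ)^κ). Then for all ν > 0, every φ ∈ Υ_{κ,S} and every t ∈ [−ν,ν]^d, |φ(t)| ≤ 7 · (max(Sν, x₀))^{(d+1)/κ} · exp(κ · (max(Sν, x₀))^{1/κ}). In other words, C_Υ(κ,S,ν) = sup_{φ ∈ Υ_{κ,S}} sup_{t ∈ [−ν,ν]^d} |φ(t)| ≤ 7 · (max(Sν, x₀))^{(d+1)/κ} · exp(κ · (max(Sν, x₀))^{1/κ}). -/

import Mathlib

/- STATEMENT 16: uniform bound on functions of the class Υ_{κ,S} over the box [−ν,ν]^d: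
   for every φ ∈ Υ_{κ,S} and t ∈ [−ν,ν]^d,
   |φ(t)| ≤ 7 (max(Sν, x₀))^{(d+1)/κ} exp(κ (max(Sν, x₀))^{1/κ}),
   where x₀ = max(1, ((d+4/3)/κ)^κ). -/

namespace Stmt16

/-- Multi-indices for d variables. -/
abbrev Idx (d : ℕ) := Fin d → ℕ

/-- ‖i‖₁ = Σ_a i_a. -/
def degSum {d : ℕ} (i : Idx d) : ℕ := ∑ a, i a

/-- The monomial z ↦ ∏_a z_a^{i_a}. -/
noncomputable def monom {d : ℕ} (i : Idx d) (z : Fin d → ℂ) : ℂ := ∏ a, z a ^ i a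

/-- φ is given everywhere on ℂ^d by the absolutely convergent power series with
coefficients c. -/
def HasCoeffs {d : ℕ} (c : Idx d → ℂ) (φ : (Fin d → ℂ) → ℂ) : Prop :=
  ∀ z : Fin d → ℂ,
    Summable (fun i : Idx d => ‖c i * monom i z‖) ∧
    HasSum (fun i : Idx d => c i * monom i z) (φ z)

/-- The coefficient conditions defining the class Υ_{κ,S}: c_0 = 1,
conj(c_i) = (−1)^{‖i‖₁} c_i, and |c_i| ≤ S^{‖i‖₁} ‖i‖₁^{−κ‖i‖₁} for i ≠ 0. -/
def CoeffBound {d : ℕ} (κ S : ℝ) (c : Idx d → ℂ) : Prop :=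
  c 0 = 1 ∧
  (∀ i : Idx d, (starRingEnd ℂ) (c i) = (-1 : ℂ) ^ degSum i * c i) ∧
  ∀ i : Idx d, i ≠ 0 →
    ‖c i‖ ≤ S ^ degSum i * (degSum i : ℝ) ^ (-(κ * (degSum i : ℝ)))

/-- Elementary inequality: u (log y − log u + 1) ≤ y for positive u, y. -/
lemma core (y u : ℝ) (hy : 0 < y) (hu : 0 < u) :
    u * (Real.log y - Real.log u + 1) ≤ y := by
  have h := Real.log_le_sub_one_of_pos (div_pos hy hu)
  rw [Real.log_div hy.ne' hu.ne'] at h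
  have h2 : u * (Real.log y - Real.log u + 1) ≤ u * (y / u) :=
    mul_le_mul_of_nonneg_left (by linarith) hu.le
  rwa [mul_div_cancel₀ _ hu.ne'] at h2

/-- The key per-term bound: x^n n^{−κn} ≤ e^{κ x^{1/κ}} e^{−κn}. -/
lemma termA (κ x : ℝ) (hκ : 0 < κ) (hx : 1 ≤ x) (n : ℕ) (hn : 1 ≤ n) :
    x ^ n * (n : ℝ) ^ (-(κ * (n : ℝ))) ≤
      Real.exp (κ * x ^ (1 / κ)) * Real.exp (-κ) ^ n := by
  have hx0 : (0:ℝ) < x := lt_of_lt_of_le one_pos hx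
  have hn0 : (0:ℝ) < (n:ℝ) := by exact_mod_cast hn
  set y := x ^ (1/κ) with hy
  have hy0 : 0 < y := Real.rpow_pos_of_pos hx0 _
  have hlx : Real.log x = κ * Real.log y := by
    rw [hy, Real.log_rpow hx0]
    field_simp
  have key := core y (n:ℝ) hy0 hn0
  calc x ^ n * (n : ℝ) ^ (-(κ * (n:ℝ)))
      = Real.exp ((n:ℝ) * Real.log x) * Real.exp (-(κ * n) * Real.log n) := by
        rw [← Real.exp_log hx0, ← Real.exp_nat_mul, Real.rpow_def_of_pos hn0,
          Real.exp_log hx0, mul_comm (Real.log (n:ℝ))]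
    _ = Real.exp ((n:ℝ) * Real.log x + (-(κ * n)) * Real.log n) := by
        rw [Real.exp_add]
    _ ≤ Real.exp (κ * y + (n:ℝ) * (-κ)) := by
        apply Real.exp_le_exp.2
        rw [hlx]
        nlinarith [key, hκ]
    _ = Real.exp (κ * y) * Real.exp (-κ) ^ n := by
        rw [Real.exp_add, Real.exp_nat_mul]

/-- The multivariate geometric series over multi-indices. -/
lemma geom_pi (q : ℝ) (h0 : 0 ≤ q) (h1 : q < 1) (d : ℕ) :
    Summable (fun i : Fin d → ℕ => q ^ (∑ a, i a)) ∧
      (∑' i : Fin d → ℕ, q ^ (∑ a, i a)) = ((1 - q)⁻¹) ^ d := by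
  induction d with
  | zero =>
    constructor
    · exact .of_finite
    · simp
  | succ d ih =>
    obtain ⟨hs, ht⟩ := ih
    have hgs : Summable (fun k : ℕ => q ^ k) := summable_geometric_of_lt_one h0 h1
    have hFs : Summable (fun p : ℕ × (Fin d → ℕ) => q ^ p.1 * q ^ (∑ a, p.2 a)) := by
      apply Summable.mul_of_nonneg hgs hs
      · intro k; exact pow_nonneg h0 k
      · intro i; exact pow_nonneg h0 _
    set F : ℕ × (Fin d → ℕ) → ℝ := fun p => q ^ p.1 * q ^ (∑ a, p.2 a) with hF
    have hcomp : (fun i : Fin (d+1) → ℕ => q ^ (∑ a, i a)) = F ∘ ((Fin.consEquiv (fun _ => ℕ)).symm) := by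
      funext i
      simp only [Function.comp, hF]
      rw [Fin.sum_univ_succ, pow_add]
      rfl
    have hsum : Summable (fun i : Fin (d+1) → ℕ => q ^ (∑ a, i a)) := by
      rw [hcomp]; exact (((Fin.consEquiv (fun _ => ℕ)).symm).summable_iff (f := F)).2 hFs
    refine ⟨hsum, ?_⟩
    have h3 : (∑' i : Fin (d+1) → ℕ, q ^ (∑ a, i a)) = ∑' p : ℕ × (Fin d → ℕ), F p := by
      rw [hcomp]; exact ((Fin.consEquiv (fun _ => ℕ)).symm).tsum_eq F
    rw [h3, hFs.tsum_prod]
    simp only [hF]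
    calc (∑' (b : ℕ) (c : Fin d → ℕ), q ^ b * q ^ (∑ a, c a))
        = ∑' (b : ℕ), q ^ b * ∑' (c : Fin d → ℕ), q ^ (∑ a, c a) := by
          congr 1; funext b; exact tsum_mul_left
      _ = (1-q)⁻¹ * (1-q)⁻¹ ^ d := by
          rw [tsum_mul_right, ht, tsum_geometric_of_lt_one h0 h1]
      _ = (1-q)⁻¹ ^ (d+1) := by ring

/-- The numeric inequality: (1 − e^{−κ})^{−d} ≤ 7 x^{(d+1)/κ}. -/
lemma numeric (d : ℕ) (hd : 1 ≤ d) (κ : ℝ) (hκ : 0 < κ) (x : ℝ)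
    (hx1 : 1 ≤ x) (hx2 : (((d:ℝ) + 4/3) / κ) ^ κ ≤ x) :
    ((1 - Real.exp (-κ))⁻¹) ^ d ≤ 7 * x ^ (((d : ℝ) + 1) / κ) := by
  have hd1 : (1:ℝ) ≤ (d:ℝ) := by exact_mod_cast hd
  have hq1 : Real.exp (-κ) < 1 := Real.exp_lt_one_iff.2 (by linarith)
  have hq0 : 0 < Real.exp (-κ) := Real.exp_pos _
  have hden : 0 < 1 - Real.exp (-κ) := by linarith
  have hX1 : 1 ≤ x ^ (((d:ℝ) + 1) / κ) :=
    Real.one_le_rpow hx1 (by positivity)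
  by_cases hcase : κ ≤ (d:ℝ) + 4/3
  · -- Case A
    set B : ℝ := (d:ℝ) + 4/3 with hB
    have hB0 : 0 < B := by positivity
    set R : ℝ := B / κ with hR
    have hR1 : 1 ≤ R := (one_le_div hκ).2 hcase
    have hR0 : 0 < R := lt_of_lt_of_le one_pos hR1
    have h1 : (1 - Real.exp (-κ))⁻¹ ≤ (κ + 1) / κ := by
      have hek : κ + 1 ≤ Real.exp κ := Real.add_one_le_exp κ
      have hexp0 : 0 < Real.exp κ := Real.exp_pos κ
      have he2 : Real.exp (-κ) ≤ (κ + 1)⁻¹ := by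
        rw [Real.exp_neg]
        exact inv_anti₀ (by linarith) hek
      have hab : κ / (κ + 1) ≤ 1 - Real.exp (-κ) := by
        have : κ / (κ + 1) = 1 - (κ+1)⁻¹ := by field_simp; ring
        rw [this]; linarith
      calc (1 - Real.exp (-κ))⁻¹ ≤ (κ / (κ + 1))⁻¹ :=
            inv_anti₀ (by positivity) hab
        _ = (κ + 1) / κ := by rw [inv_div]
    have h2 : ((1 - Real.exp (-κ))⁻¹) ^ d ≤ ((κ + 1) / κ) ^ d :=
      pow_le_pow_left₀ (inv_nonneg.2 hden.le) h1 d
    have h3 : ((κ + 1) / κ) ^ d ≤ ((B + 1) / κ) ^ d := by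
      have hle : (κ + 1) / κ ≤ (B + 1) / κ := by
        gcongr
      exact pow_le_pow_left₀ (by positivity) hle d
    have h4 : ((B + 1) / κ) ^ d = ((B + 1) / B) ^ d * R ^ d := by
      rw [← mul_pow]
      congr 1
      rw [hR]; field_simp
    have h5 : ((B + 1) / B) ^ d ≤ 3 := by
      have e1 : (B + 1) / B = 1 + 1/B := by field_simp
      have e2 : 1 + 1/B ≤ Real.exp (1/B) := by
        have := Real.add_one_le_exp (1/B); linarith
      calc ((B + 1) / B) ^ d ≤ Real.exp (1/B) ^ d := by
            rw [e1]; exact pow_le_pow_left₀ (by positivity) e2 d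
        _ = Real.exp ((d:ℝ) * (1/B)) := (Real.exp_nat_mul _ d).symm
        _ ≤ Real.exp 1 := by
            apply Real.exp_le_exp.2
            rw [mul_one_div, div_le_one hB0, hB]
            linarith
        _ ≤ 3 := by linarith [Real.exp_one_lt_d9]
    have h6 : R ^ d * R ≤ x ^ (((d:ℝ) + 1) / κ) := by
      have e3 : R ^ d * R = R ^ (d + 1) := by ring
      have e4 : (R ^ κ) ^ (((d:ℝ) + 1) / κ) = R ^ (d+1 : ℕ) := by
        rw [← Real.rpow_natCast R (d+1), ← Real.rpow_mul hR0.le]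
        congr 1
        push_cast
        field_simp
      calc R ^ d * R = R ^ (d+1:ℕ) := e3
        _ = (R ^ κ) ^ (((d:ℝ) + 1) / κ) := e4.symm
        _ ≤ x ^ (((d:ℝ) + 1) / κ) := by
            apply Real.rpow_le_rpow (Real.rpow_nonneg hR0.le κ) hx2 (by positivity)
    calc ((1 - Real.exp (-κ))⁻¹) ^ d ≤ ((B + 1) / κ) ^ d := le_trans h2 h3
      _ = ((B + 1) / B) ^ d * R ^ d := h4
      _ ≤ 3 * R ^ d := by
          apply mul_le_mul_of_nonneg_right h5 (by positivity)
      _ ≤ 3 * (R ^ d * R) := by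
          have : R ^ d ≤ R ^ d * R := le_mul_of_one_le_right (by positivity) hR1
          linarith
      _ ≤ 3 * x ^ (((d:ℝ) + 1) / κ) := by
          apply mul_le_mul_of_nonneg_left h6 (by norm_num)
      _ ≤ 7 * x ^ (((d:ℝ) + 1) / κ) := by nlinarith [hX1]
  · -- Case B
    push_neg at hcase
    have hqle : (d:ℝ) * Real.exp (-κ) ≤ 6/7 := by
      have h1 : (d:ℝ) ≤ Real.exp ((d:ℝ) - 1) := by
        have := Real.add_one_le_exp ((d:ℝ) - 1); linarith
      have h2 : Real.exp (-κ) ≤ Real.exp (-(d:ℝ) - 4/3) :=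
        Real.exp_le_exp.2 (by linarith)
      have h3 : (d:ℝ) * Real.exp (-κ) ≤ Real.exp ((d:ℝ)-1) * Real.exp (-(d:ℝ) - 4/3) := by
        apply mul_le_mul h1 h2 hq0.le (Real.exp_pos _).le
      rw [← Real.exp_add] at h3
      have h4 : Real.exp ((d:ℝ) - 1 + (-(d:ℝ) - 4/3)) = Real.exp (-(7/3)) := by
        congr 1; ring
      have h5 : Real.exp (-(7/3)) ≤ 6/7 := by
        rw [Real.exp_neg]
        have : (2:ℝ) ≤ Real.exp (7/3) := by
          have := Real.add_one_le_exp (7/3 : ℝ); linarith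
        rw [inv_le_iff_one_le_mul₀ (by positivity)]
        linarith
      rw [h4] at h3; linarith
    have hb : (1/7 : ℝ) ≤ (1 - Real.exp (-κ)) ^ d := by
      have hber := one_add_mul_le_pow (a := -Real.exp (-κ)) (by linarith) d
      have e : 1 + (d:ℝ) * (-Real.exp (-κ)) = 1 - (d:ℝ) * Real.exp (-κ) := by ring
      rw [e] at hber
      calc (1/7:ℝ) ≤ 1 - (d:ℝ) * Real.exp (-κ) := by linarith
        _ ≤ (1 - Real.exp (-κ)) ^ d := hber
    have h7 : ((1 - Real.exp (-κ))⁻¹) ^ d ≤ 7 := by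
      rw [inv_pow]
      have hpos : (0:ℝ) < (1 - Real.exp (-κ)) ^ d := pow_pos hden d
      rw [inv_le_iff_one_le_mul₀ hpos]
      nlinarith [hb]
    calc ((1 - Real.exp (-κ))⁻¹) ^ d ≤ 7 := h7
      _ ≤ 7 * x ^ (((d:ℝ) + 1) / κ) := by nlinarith [hX1]

theorem stmt16 (d : ℕ) (hd : 1 ≤ d) (κ S : ℝ) (hκ : 0 < κ) (hS : 0 < S)
    (ν : ℝ) (hν : 0 < ν)
    (φ : (Fin d → ℂ) → ℂ) (c : Idx d → ℂ)
    (hc : HasCoeffs c φ) (hb : CoeffBound κ S c)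
    (t : Fin d → ℝ) (ht : ∀ a, |t a| ≤ ν) :
    ‖φ (fun a => (t a : ℂ))‖ ≤
      7 * (max (S * ν) (max 1 ((((d : ℝ) + 4 / 3) / κ) ^ κ))) ^ (((d : ℝ) + 1) / κ) *
        Real.exp (κ * (max (S * ν) (max 1 ((((d : ℝ) + 4 / 3) / κ) ^ κ))) ^ (1 / κ)) := by
  set x : ℝ := max (S * ν) (max 1 ((((d : ℝ) + 4 / 3) / κ) ^ κ)) with hxdef
  have hx1 : 1 ≤ x := le_trans (le_max_left 1 _) (le_max_right _ _)
  have hx2 : (((d:ℝ) + 4/3) / κ) ^ κ ≤ x :=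
    le_trans (le_max_right 1 _) (le_max_right _ _)
  have hx0 : (0:ℝ) < x := lt_of_lt_of_le one_pos hx1
  set q : ℝ := Real.exp (-κ) with hqdef
  have hq0 : 0 < q := Real.exp_pos _
  have hq1 : q < 1 := Real.exp_lt_one_iff.2 (by linarith)
  set E : ℝ := Real.exp (κ * x ^ (1 / κ)) with hEdef
  have hE1 : 1 ≤ E := Real.one_le_exp (by positivity)
  -- pointwise bound on the terms of the series
  have habs : ∀ i : Idx d, ‖monom i fun a => (t a : ℂ)‖ ≤ ν ^ degSum i := by
    intro i
    unfold monom degSum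
    rw [norm_prod]
    calc (∏ a, ‖(t a : ℂ) ^ i a‖) ≤ ∏ a, ν ^ i a := by
          apply Finset.prod_le_prod
          · intro a _; positivity
          · intro a _
            rw [norm_pow, Complex.norm_real, Real.norm_eq_abs]
            exact pow_le_pow_left₀ (abs_nonneg _) (ht a) _
      _ = ν ^ ∑ a, i a := Finset.prod_pow_eq_pow_sum _ _ _
  have hpt : ∀ i : Idx d,
      ‖c i * monom i fun a => (t a : ℂ)‖ ≤ E * q ^ degSum i := by
    intro i
    rw [norm_mul]
    by_cases hi : i = 0
    · subst hi
      have h0 : degSum (0 : Idx d) = 0 := by simp [degSum]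
      have hm : monom (0 : Idx d) (fun a => (t a : ℂ)) = 1 := by simp [monom]
      rw [hb.1, h0, hm]
      simpa using hE1
    · have hn : 1 ≤ degSum i := by
        rcases Nat.eq_zero_or_pos (degSum i) with h | h
        · exfalso
          apply hi
          funext a
          have := (Finset.sum_eq_zero_iff.1 h) a (Finset.mem_univ a)
          simpa using this
        · exact h
      have h1 : ‖c i‖ ≤
          S ^ degSum i * (degSum i : ℝ) ^ (-(κ * (degSum i : ℝ))) := hb.2.2 i hi
      have h2 := habs i
      have hrp : (0:ℝ) ≤ (degSum i : ℝ) ^ (-(κ * (degSum i : ℝ))) :=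
        Real.rpow_nonneg (by positivity) _
      calc ‖c i‖ * ‖monom i fun a => (t a : ℂ)‖
          ≤ (S ^ degSum i * (degSum i : ℝ) ^ (-(κ * (degSum i : ℝ)))) * ν ^ degSum i := by
            apply mul_le_mul h1 h2 (by positivity) (by positivity)
        _ = (S * ν) ^ degSum i * (degSum i : ℝ) ^ (-(κ * (degSum i : ℝ))) := by
            rw [mul_pow]; ring
        _ ≤ x ^ degSum i * (degSum i : ℝ) ^ (-(κ * (degSum i : ℝ))) := by
            apply mul_le_mul_of_nonneg_right ?_ hrp
            exact pow_le_pow_left₀ (by positivity) (le_max_left _ _) _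
        _ ≤ E * q ^ degSum i := termA κ x hκ hx1 (degSum i) hn
  -- summation
  obtain ⟨hfs, hfh⟩ := hc (fun a => (t a : ℂ))
  obtain ⟨hgs0, hgt⟩ := geom_pi q hq0.le hq1 d
  have hgs : Summable (fun i : Idx d => E * q ^ degSum i) := by
    simp only [degSum]
    exact hgs0.mul_left E
  have step1 : ‖φ fun a => (t a : ℂ)‖ ≤
      ∑' i : Idx d, ‖c i * monom i fun a => (t a : ℂ)‖ := by
    rw [← hfh.tsum_eq]
    exact
      norm_tsum_le_tsum_norm (f := fun i : Idx d => c i * monom i fun a => (t a : ℂ))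
        hfs
  have step2 : (∑' i : Idx d, ‖c i * monom i fun a => (t a : ℂ)‖) ≤
      ∑' i : Idx d, E * q ^ degSum i := Summable.tsum_le_tsum hpt hfs hgs
  have step3 : (∑' i : Idx d, E * q ^ degSum i) = E * ((1 - q)⁻¹) ^ d := by
    have hgt' : (∑' i : Idx d, q ^ degSum i) = ((1 - q)⁻¹) ^ d := by
      simpa only [degSum] using hgt
    rw [tsum_mul_left, hgt']
  have step4 : E * ((1 - q)⁻¹) ^ d ≤
      7 * x ^ (((d : ℝ) + 1) / κ) * E := by
    have hnum := numeric d hd κ hκ x hx1 hx2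
    calc E * ((1 - q)⁻¹) ^ d ≤ E * (7 * x ^ (((d : ℝ) + 1) / κ)) := by
          apply mul_le_mul_of_nonneg_left hnum (by positivity)
      _ = 7 * x ^ (((d : ℝ) + 1) / κ) * E := by ring
  calc ‖φ fun a => (t a : ℂ)‖
      ≤ ∑' i : Idx d, ‖c i * monom i fun a => (t a : ℂ)‖ := step1
    _ ≤ ∑' i : Idx d, E * q ^ degSum i := step2
    _ = E * ((1 - q)⁻¹) ^ d := step3
    _ ≤ 7 * x ^ (((d : ℝ) + 1) / κ) * E := step4

end Stmt16
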